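/- Let θ_1,…,θ_n ∈ ℝ (with θ_0 := 0) and suppose 1 = t_1 < ⋯ < t_{m+1} = n+1 satisfy Σ_{t=t_i}^{t_{i+1}−2} |θ_t − θ_{t+1}| ≤ C/m for each i ∈ {1,…,m}. Then Σ_{i=2}^{m} |θ̄_{t_{i−1}:(t_i−1)} − θ_{t_i}| ≤ Σ_{t=1}^{n−1} |θ_t − θ_{t+1}|, where θ̄_{r:s} := (1/(s−r+1)) Σ_{t=r}^{s} θ_t. -/

import Mathlib

open Finset

private lemma t_mono' {m : ℕ} {t : ℕ → ℕ}
    (hmono : ∀ i ∈ Finset.Icc 1 m, t i < t (i + 1)) :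
    ∀ i j, 1 ≤ i → i ≤ j → j ≤ m + 1 → t i ≤ t j := by
  intro i j hi hij hjm
  induction j with
  | zero => omega
  | succ k ih =>
    rcases Nat.lt_or_ge i (k + 1) with h | h
    · have h1 : t i ≤ t k := ih (by omega) (by omega)
      have h2 : t k < t (k + 1) := hmono k (by simp only [Finset.mem_Icc]; omega)
      omega
    · have : i = k + 1 := by omega
      simp [this]

private lemma sum_parts (t : ℕ → ℕ) (g : ℕ → ℝ) :
    ∀ M, 1 ≤ M → (∀ i ∈ Finset.Icc 1 M, t i < t (i + 1)) →
    ∑ i ∈ Finset.Icc 2 M, ∑ s ∈ Finset.Ico (t (i - 1)) (t i), g s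
      = ∑ s ∈ Finset.Ico (t 1) (t M), g s := by
  intro M hM
  induction M, hM using Nat.le_induction with
  | base => intro _; simp
  | succ k hk ih =>
    intro hmono
    have hmono' : ∀ i ∈ Finset.Icc 1 k, t i < t (i + 1) := by
      intro i hi
      simp only [Finset.mem_Icc] at hi
      exact hmono i (by simp only [Finset.mem_Icc]; omega)
    rw [Finset.sum_Icc_succ_top (by omega), ih hmono']
    have h1k : t 1 ≤ t k := t_mono' hmono' 1 k le_rfl hk (by omega)
    have hkk : t k ≤ t (k + 1) :=
      le_of_lt (hmono k (by simp only [Finset.mem_Icc]; omega))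
    simp only [Nat.add_sub_cancel]
    rw [Finset.sum_Ico_consecutive _ h1k hkk]

theorem boundary_errors_le_tv (n m : ℕ) (C : ℝ) (θ : ℕ → ℝ) (t : ℕ → ℕ)
    (hn : 1 ≤ n) (hm : 1 ≤ m) (hθ0 : θ 0 = 0)
    (ht1 : t 1 = 1) (htm : t (m + 1) = n + 1)
    (hmono : ∀ i ∈ Finset.Icc 1 m, t i < t (i + 1))
    (hTV : ∀ i ∈ Finset.Icc 1 m,
      ∑ s ∈ Finset.Ico (t i) (t (i + 1) - 1), |θ s - θ (s + 1)| ≤ C / m) :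
    ∑ i ∈ Finset.Icc 2 m,
        |(1 / ((t i : ℝ) - t (i - 1))) * ∑ u ∈ Finset.Ico (t (i - 1)) (t i), θ u - θ (t i)|
      ≤ ∑ s ∈ Finset.Icc 1 (n - 1), |θ s - θ (s + 1)| := by
  set g : ℕ → ℝ := fun s => |θ s - θ (s + 1)| with hg
  have hg0 : ∀ s, 0 ≤ g s := fun s => abs_nonneg _
  -- per-batch bound
  have step1 : ∀ i ∈ Finset.Icc 2 m,
      |(1 / ((t i : ℝ) - t (i - 1))) * ∑ u ∈ Finset.Ico (t (i - 1)) (t i), θ u - θ (t i)|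
        ≤ ∑ s ∈ Finset.Ico (t (i - 1)) (t i), g s := by
    intro i hi
    simp only [Finset.mem_Icc] at hi
    have hab : t (i - 1) < t i := by
      have h := hmono (i - 1) (by simp only [Finset.mem_Icc]; omega)
      rwa [show i - 1 + 1 = i by omega] at h
    set a := t (i - 1)
    set b := t i
    set B : ℝ := ∑ s ∈ Finset.Ico a b, g s with hB
    have hk : (0 : ℝ) < (b : ℝ) - a := by
      have : (a : ℝ) < b := by exact_mod_cast hab
      linarith
    have hcard : ((Finset.Ico a b).card : ℝ) = (b : ℝ) - a := by
      rw [Nat.card_Ico]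
      push_cast [Nat.cast_sub (le_of_lt hab)]
      ring
    -- pointwise bound
    have hpt : ∀ u ∈ Finset.Ico a b, |θ u - θ b| ≤ B := by
      intro u hu
      simp only [Finset.mem_Ico] at hu
      have htel : θ b - θ u = ∑ s ∈ Finset.Ico u b, (θ (s + 1) - θ s) := by
        rw [Finset.sum_Ico_eq_sub _ (le_of_lt hu.2), Finset.sum_range_sub,
          Finset.sum_range_sub]
        ring
      have h1 : |θ u - θ b| ≤ ∑ s ∈ Finset.Ico u b, g s := by
        rw [abs_sub_comm, htel]
        refine (Finset.abs_sum_le_sum_abs _ _).trans ?_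
        refine Finset.sum_le_sum fun s _ => ?_
        rw [abs_sub_comm]
      refine h1.trans (Finset.sum_le_sum_of_subset_of_nonneg ?_ fun s _ _ => hg0 s)
      exact Finset.Ico_subset_Ico hu.1 le_rfl
    have hsplit : (1 / ((b : ℝ) - a)) * (∑ u ∈ Finset.Ico a b, θ u) - θ b
        = (1 / ((b : ℝ) - a)) * ∑ u ∈ Finset.Ico a b, (θ u - θ b) := by
      rw [Finset.sum_sub_distrib, Finset.sum_const, nsmul_eq_mul, hcard]
      field_simp
    rw [hsplit, abs_mul, abs_of_pos (by positivity : (0:ℝ) < 1 / ((b:ℝ) - a))]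
    have h2 : |∑ u ∈ Finset.Ico a b, (θ u - θ b)| ≤ ((b : ℝ) - a) * B := by
      refine (Finset.abs_sum_le_sum_abs _ _).trans ?_
      calc ∑ u ∈ Finset.Ico a b, |θ u - θ b| ≤ ∑ u ∈ Finset.Ico a b, B :=
            Finset.sum_le_sum hpt
        _ = ((b : ℝ) - a) * B := by rw [Finset.sum_const, nsmul_eq_mul, hcard]
    calc 1 / ((b : ℝ) - a) * |∑ u ∈ Finset.Ico a b, (θ u - θ b)|
        ≤ 1 / ((b : ℝ) - a) * (((b : ℝ) - a) * B) := by
          exact mul_le_mul_of_nonneg_left h2 (by positivity)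
      _ = B := by field_simp
  have step2 := sum_parts t g m hm hmono
  have htmn : t m ≤ n := by
    have := hmono m (by simp only [Finset.mem_Icc]; omega)
    omega
  have step3 : ∑ s ∈ Finset.Ico (t 1) (t m), g s ≤ ∑ s ∈ Finset.Icc 1 (n - 1), g s := by
    have : Finset.Icc 1 (n - 1) = Finset.Ico 1 n := by
      rw [← Finset.Ico_add_one_right_eq_Icc, show n - 1 + 1 = n from by omega]
    rw [this, ht1]
    exact Finset.sum_le_sum_of_subset_of_nonneg
      (Finset.Ico_subset_Ico le_rfl htmn) fun s _ _ => hg0 s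
  calc ∑ i ∈ Finset.Icc 2 m,
        |(1 / ((t i : ℝ) - t (i - 1))) * ∑ u ∈ Finset.Ico (t (i - 1)) (t i), θ u - θ (t i)|
      ≤ ∑ i ∈ Finset.Icc 2 m, ∑ s ∈ Finset.Ico (t (i - 1)) (t i), g s :=
        Finset.sum_le_sum step1
    _ = ∑ s ∈ Finset.Ico (t 1) (t m), g s := step2
    _ ≤ ∑ s ∈ Finset.Icc 1 (n - 1), g s := step3
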